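/- Let P_target and Q be probability measures on Z, and set e = R_exp(P_target) − R_exp(Q). If S = (z_1,…,z_n) is drawn i.i.d. from Q (i.e., S ∼ Q^⊗n) with n ≥ 2, then for any δ ∈ (0,1), with probability at least 1 − δ over the draw of S, one has R_exp(P_target) ≤ R_emp(S) + e + sqrt(2·ln(1/δ)/n). -/

import Mathlib

open MeasureTheory Real

-- derivative setup
lemma aux_D_pos {p : ℝ} (hp0 : 0 ≤ p) (hp1 : p ≤ 1) (h : ℝ) : 0 < 1 - p + p * exp h := by
  rcases eq_or_lt_of_le hp1 with rfl | hlt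
  · simpa using exp_pos h
  · have : 0 < 1 - p := by linarith
    nlinarith [exp_pos h]

lemma hoeffding_analytic {p : ℝ} (hp0 : 0 ≤ p) (hp1 : p ≤ 1) (h : ℝ) :
    Real.log (1 - p + p * Real.exp h) - p * h ≤ h ^ 2 / 8 := by
  set D : ℝ → ℝ := fun x => 1 - p + p * exp x with hD
  have hDpos : ∀ x, 0 < D x := fun x => aux_D_pos hp0 hp1 x
  have hDderiv : ∀ x, HasDerivAt D (p * exp x) x := by
    intro x
    exact ((Real.hasDerivAt_exp x).const_mul p).const_add (1 - p)
  -- L x = log (D x) - p x ; L' x = p exp x / D x - p ; L'' x = p (1-p) exp x / (D x)^2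
  set L : ℝ → ℝ := fun x => Real.log (D x) - p * x with hLdef
  set L' : ℝ → ℝ := fun x => p * exp x / D x - p with hL'def
  have hLderiv : ∀ x, HasDerivAt L (L' x) x := by
    intro x
    have h1 : HasDerivAt (fun x => Real.log (D x)) (p * exp x / D x) x :=
      (hDderiv x).log (hDpos x).ne'
    exact (h1.sub ((hasDerivAt_id' x).const_mul p)).congr_deriv (by ring)
  have hL'deriv : ∀ x, HasDerivAt L' (p * (1 - p) * exp x / (D x) ^ 2) x := by
    intro x
    have h1 : HasDerivAt (fun x => p * exp x / D x)
        ((p * exp x * D x - p * exp x * (p * exp x)) / (D x) ^ 2) x :=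
      ((Real.hasDerivAt_exp x).const_mul p).div (hDderiv x) (hDpos x).ne'
    have heq : (p * exp x * D x - p * exp x * (p * exp x)) / (D x) ^ 2
        = p * (1 - p) * exp x / (D x) ^ 2 := by
      congr 1; simp only [hD]; ring
    rw [heq] at h1
    simpa [hL'def] using h1.sub_const p
  have hL''le : ∀ x, p * (1 - p) * exp x / (D x) ^ 2 ≤ 1 / 4 := by
    intro x
    rw [div_le_iff₀ (pow_pos (hDpos x) 2)]
    have h4 : (D x) ^ 2 ≥ 4 * ((1 - p) * (p * exp x)) := by
      have := sq_nonneg ((1 - p) - p * exp x)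
      simp only [hD]; nlinarith
    nlinarith [h4, sq_nonneg ((1 - p) - p * exp x), sq_nonneg ((1 - p) + p * exp x)]
  have hL''nonneg : ∀ x, 0 ≤ p * (1 - p) * exp x / (D x) ^ 2 := by
    intro x
    exact div_nonneg (mul_nonneg (mul_nonneg hp0 (by linarith)) (exp_pos x).le) (sq_nonneg _)
  -- F1 x = x/4 - L' x is monotone
  have hF1mono : Monotone (fun x => x / 4 - L' x) := by
    have : ∀ x, HasDerivAt (fun x => x / 4 - L' x) (1 / 4 - p * (1 - p) * exp x / (D x) ^ 2) x := by
      intro x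
      exact (((hasDerivAt_id' x).div_const 4).sub (hL'deriv x)).congr_deriv (by ring)
    apply monotone_of_deriv_nonneg
    · exact fun x => ((this x).differentiableAt)
    · intro x
      rw [(this x).deriv]
      linarith [hL''le x]
  have hL'0 : L' 0 = 0 := by simp [hL'def, hD]
  have hL0 : L 0 = 0 := by simp [hLdef, hD]
  have hF1_0 : (fun x => x / 4 - L' x) 0 = 0 := by simp [hL'0]
  -- F2 x = x^2/8 - L x
  have hF2deriv : ∀ x, HasDerivAt (fun x => x ^ 2 / 8 - L x) (x / 4 - L' x) x := by
    intro x
    have h1 : HasDerivAt (fun x : ℝ => x ^ 2 / 8) (x / 4) x := by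
      have := (hasDerivAt_pow 2 x).div_const 8
      exact this.congr_deriv (by simp only [Nat.cast_ofNat, show (2:ℕ) - 1 = 1 from rfl, pow_one]; ring)
    exact h1.sub (hLderiv x)
  have key : 0 ≤ h ^ 2 / 8 - L h := by
    rcases le_total 0 h with hh | hh
    · have hmono : MonotoneOn (fun x => x ^ 2 / 8 - L x) (Set.Ici 0) := by
        apply monotoneOn_of_deriv_nonneg (convex_Ici 0)
        · exact Continuous.continuousOn
            (Differentiable.continuous (fun x => (hF2deriv x).differentiableAt))
        · intro x _; exact (hF2deriv x).differentiableAt.differentiableWithinAt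
        · intro x hx
          rw [(hF2deriv x).deriv]
          have : (0:ℝ) ≤ x := le_of_lt (by simpa using hx)
          have := hF1mono this
          rw [hF1_0] at this; linarith [this]
      have := hmono (Set.self_mem_Ici) (Set.mem_Ici.mpr hh) hh
      simpa [hL0] using this
    · have hanti : AntitoneOn (fun x => x ^ 2 / 8 - L x) (Set.Iic 0) := by
        apply antitoneOn_of_deriv_nonpos (convex_Iic 0)
        · exact Continuous.continuousOn
            (Differentiable.continuous (fun x => (hF2deriv x).differentiableAt))
        · intro x _; exact (hF2deriv x).differentiableAt.differentiableWithinAt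
        · intro x hx
          rw [(hF2deriv x).deriv]
          have hx0 : x ≤ (0:ℝ) := le_of_lt (by simpa using hx)
          have := hF1mono hx0
          rw [hF1_0] at this; linarith [this]
      have := hanti (Set.mem_Iic.mpr hh) Set.self_mem_Iic hh
      simpa [hL0] using this
  simp only [hLdef, hD] at key
  linarith

lemma integrable_of_bounded' {α : Type*} [MeasurableSpace α] {μ : Measure α}
    [IsFiniteMeasure μ] {f : α → ℝ} (hf : Measurable f) (C : ℝ) (hC : ∀ x, |f x| ≤ C) :
    Integrable f μ :=
  (integrable_const C).mono' hf.aestronglyMeasurable (ae_of_all _ hC)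

lemma hoeffding_lemma {α : Type*} [MeasurableSpace α] (μ : Measure α) [IsProbabilityMeasure μ]
    (X : α → ℝ) (hX : Measurable X) (a b : ℝ) (hab : ∀ x, a ≤ X x ∧ X x ≤ b)
    (hmean : ∫ x, X x ∂μ = 0) (s : ℝ) :
    ∫ x, exp (s * X x) ∂μ ≤ exp (s ^ 2 * (b - a) ^ 2 / 8) := by
  have habs : ∀ x, |X x| ≤ max |a| |b| := by
    intro x
    rw [abs_le]
    constructor
    · have h1 : -(max |a| |b|) ≤ a := by
        have := neg_abs_le a; have := le_max_left |a| |b|; linarith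
      linarith [(hab x).1]
    · have h1 : b ≤ max |a| |b| := le_trans (le_abs_self b) (le_max_right |a| |b|)
      linarith [(hab x).2]
  have hXint : Integrable X μ := integrable_of_bounded' hX (max |a| |b|) habs
  have ha0 : a ≤ 0 := by
    have h1 : ∫ _ : α, a ∂μ ≤ ∫ x, X x ∂μ :=
      integral_mono (integrable_const a) hXint (fun x => (hab x).1)
    simpa [hmean] using h1
  have hb0 : 0 ≤ b := by
    have h1 : ∫ x, X x ∂μ ≤ ∫ _ : α, b ∂μ :=
      integral_mono hXint (integrable_const b) (fun x => (hab x).2)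
    simpa [hmean] using h1
  rcases eq_or_lt_of_le (le_trans ha0 hb0) with hEq | hlt
  · -- a = 0 = b : X = 0
    have ha : a = 0 := le_antisymm ha0 (hEq ▸ hb0)
    have hXx : ∀ x, X x = 0 := by
      intro x
      have := (hab x).1; have := (hab x).2
      have hb : b = 0 := by rw [← hEq, ha]
      rw [ha] at *; rw [hb] at *
      linarith
    have : ∫ x, exp (s * X x) ∂μ = 1 := by
      simp only [hXx, mul_zero, exp_zero]
      simp
    rw [this, ← exp_zero]
    exact exp_le_exp.mpr (by positivity)
  · -- a < b
    have hba : (0:ℝ) < b - a := by linarith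
    set p : ℝ := -a / (b - a) with hp
    set h : ℝ := s * (b - a) with hh
    have hp0 : 0 ≤ p := div_nonneg (by linarith) hba.le
    have hp1 : p ≤ 1 := by rw [div_le_one hba]; linarith
    -- pointwise convexity bound
    have hpt : ∀ x, exp (s * X x) ≤
        ((b - X x) / (b - a)) * exp (s * a) + ((X x - a) / (b - a)) * exp (s * b) := by
      intro x
      have hθ0 : 0 ≤ (b - X x) / (b - a) := div_nonneg (by linarith [(hab x).2]) hba.le
      have hθ1 : 0 ≤ (X x - a) / (b - a) := div_nonneg (by linarith [(hab x).1]) hba.le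
      have hθs : (b - X x) / (b - a) + (X x - a) / (b - a) = 1 := by
        field_simp
        ring
      have hcomb : (b - X x) / (b - a) * (s * a) + (X x - a) / (b - a) * (s * b) = s * X x := by
        field_simp; ring
      have := convexOn_exp.2 (Set.mem_univ (s * a)) (Set.mem_univ (s * b)) hθ0 hθ1 hθs
      simp only [smul_eq_mul] at this
      rw [hcomb] at this
      exact this
    have hexpint : Integrable (fun x => exp (s * X x)) μ := by
      apply integrable_of_bounded' (by measurability) (exp (|s| * max |a| |b|))
      intro x
      rw [abs_of_pos (exp_pos _)]
      apply exp_le_exp.mpr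
      calc s * X x ≤ |s * X x| := le_abs_self _
        _ = |s| * |X x| := abs_mul s (X x)
        _ ≤ |s| * max |a| |b| := by
            apply mul_le_mul_of_nonneg_left _ (abs_nonneg s)
            exact habs x
    have hRHSint : Integrable (fun x =>
        ((b - X x) / (b - a)) * exp (s * a) + ((X x - a) / (b - a)) * exp (s * b)) μ := by
      apply Integrable.add
      · exact ((((integrable_const b).sub hXint).div_const (b - a)).mul_const _)
      · exact (((hXint.sub (integrable_const a)).div_const (b - a)).mul_const _)
    have hint : ∫ x, exp (s * X x) ∂μ ≤ (b * exp (s * a) - a * exp (s * b)) / (b - a) := by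
      calc ∫ x, exp (s * X x) ∂μ
          ≤ ∫ x, (((b - X x) / (b - a)) * exp (s * a) + ((X x - a) / (b - a)) * exp (s * b)) ∂μ :=
            integral_mono hexpint hRHSint hpt
        _ = (b * exp (s * a) - a * exp (s * b)) / (b - a) := by
            have hre : ∀ x, ((b - X x) / (b - a)) * exp (s * a) + ((X x - a) / (b - a)) * exp (s * b)
                = (b * exp (s * a) - a * exp (s * b)) / (b - a)
                  + ((exp (s * b) - exp (s * a)) / (b - a)) * X x := by
              intro x; field_simp; ring
            simp_rw [hre]
            rw [integral_add (integrable_const _) (hXint.const_mul _),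
              integral_const_mul, hmean, integral_const]
            simp
    -- rewrite in terms of p, h
    have hsa : s * a = -(p * h) := by
      rw [hp, hh]; field_simp
    have hsb : s * b = h - p * h := by
      rw [hp, hh]; field_simp; ring
    have hval : (b * exp (s * a) - a * exp (s * b)) / (b - a)
        = exp (-(p * h)) * ((1 - p) + p * exp h) := by
      have h1p : 1 - p = b / (b - a) := by rw [hp]; field_simp; ring
      rw [hsa, hsb, mul_add, mul_comm (exp (-(p*h))) (p * exp h), mul_assoc,
        ← exp_add]
      have : h + -(p * h) = h - p * h := by ring
      rw [this]
      rw [h1p, hp]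
      field_simp
      ring
    have hbound : exp (-(p * h)) * ((1 - p) + p * exp h) ≤ exp (h ^ 2 / 8) := by
      have hM : 0 < (1 - p) + p * exp h := by
        have := aux_D_pos hp0 hp1 h; linarith
      have hlog := hoeffding_analytic hp0 hp1 h
      have : (1 - p) + p * exp h ≤ exp (h ^ 2 / 8 + p * h) := by
        calc (1 - p) + p * exp h = exp (Real.log ((1 - p) + p * exp h)) := (exp_log hM).symm
          _ ≤ exp (h ^ 2 / 8 + p * h) := exp_le_exp.mpr (by linarith)
      calc exp (-(p * h)) * ((1 - p) + p * exp h)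
          ≤ exp (-(p * h)) * exp (h ^ 2 / 8 + p * h) :=
            mul_le_mul_of_nonneg_left this (exp_pos _).le
        _ = exp (h ^ 2 / 8) := by rw [← exp_add]; ring_nf
    calc ∫ x, exp (s * X x) ∂μ ≤ (b * exp (s * a) - a * exp (s * b)) / (b - a) := hint
      _ = exp (-(p * h)) * ((1 - p) + p * exp h) := hval
      _ ≤ exp (h ^ 2 / 8) := hbound
      _ = exp (s ^ 2 * (b - a) ^ 2 / 8) := by rw [hh]; ring_nf

lemma abs_integral_le {α : Type*} [MeasurableSpace α] {μ : Measure α} (f : α → ℝ) :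
    |∫ x, f x ∂μ| ≤ ∫ x, |f x| ∂μ := by
  simpa [Real.norm_eq_abs] using norm_integral_le_integral_norm (μ := μ) f

lemma measurable_finCons {Z : Type*} [MeasurableSpace Z] (n : ℕ) :
    Measurable (fun zt : Z × (Fin n → Z) => Fin.cons zt.1 zt.2 : Z × (Fin n → Z) → (Fin (n+1) → Z)) := by
  rw [measurable_pi_iff]
  intro i
  induction i using Fin.cases with
  | zero => simpa using measurable_fst
  | succ j => simpa [Function.comp_def] using (measurable_pi_apply j).comp measurable_snd

lemma mcdiarmid_mgf {Z : Type*} [MeasurableSpace Z] (Q : Measure Z) [IsProbabilityMeasure Q]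
    (hZ : Nonempty Z) :
    ∀ (n : ℕ) (f : (Fin n → Z) → ℝ) (B : ℝ), Measurable f → (∀ S, |f S| ≤ B) →
    ∀ (c : ℝ), 0 ≤ c → (∀ (S : Fin n → Z) (i : Fin n) (z : Z),
      |f (Function.update S i z) - f S| ≤ c) →
    ∀ (s : ℝ),
    ∫ S, exp (s * ((∫ T, f T ∂(Measure.pi fun _ : Fin n => Q)) - f S))
        ∂(Measure.pi fun _ : Fin n => Q)
      ≤ exp (s ^ 2 * n * c ^ 2 / 8) := by
  intro n
  induction n with
  | zero =>
    intro f B hfm hfB c hc hdiff s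
    have hconst : ∀ S : Fin 0 → Z, f S = f default := fun S => by
      congr 1; exact Subsingleton.elim S default
    have h1 : (∫ T, f T ∂(Measure.pi fun _ : Fin 0 => Q)) = f default := by
      simp_rw [hconst]; simp
    simp_rw [h1, hconst, sub_self, mul_zero, exp_zero]
    simp
  | succ n ih =>
    intro f B hfm hfB c hc hdiff s
    set P1 : Measure (Fin (n+1) → Z) := Measure.pi fun _ => Q with hP1
    set Pn : Measure (Fin n → Z) := Measure.pi fun _ => Q with hPn
    set m : ℝ := ∫ T, f T ∂P1 with hm
    have hcons : ∀ (z : Z) (T : Fin n → Z),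
        (MeasurableEquiv.piFinSuccAbove (fun _ : Fin (n+1) => Z) 0).symm (z, T)
          = Fin.cons z T := by
      intro z T
      funext i
      induction i using Fin.cases with
      | zero => simp [MeasurableEquiv.piFinSuccAbove_symm_apply, Fin.insertNthEquiv]
      | succ j =>
        simp [MeasurableEquiv.piFinSuccAbove_symm_apply, Fin.insertNthEquiv,
          Fin.insertNth_apply_succAbove]
    have hmp : MeasurePreserving
        (MeasurableEquiv.piFinSuccAbove (fun _ : Fin (n+1) => Z) 0).symm
        (Q.prod Pn) P1 := by
      have := (measurePreserving_piFinSuccAbove (fun _ : Fin (n+1) => Q) 0).symm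
      simpa using this
    -- transfer integrals from π to Q.prod πn
    have hcomp : ∀ (G : (Fin (n+1) → Z) → ℝ), Measurable G →
        ∫ S, G S ∂P1 = ∫ zt : Z × (Fin n → Z), G (Fin.cons zt.1 zt.2) ∂(Q.prod Pn) := by
      intro G hG
      rw [← hmp.integral_comp (MeasurableEquiv.measurableEmbedding _)]
      congr 1
      funext zt
      rw [hcons zt.1 zt.2]
    -- the function g
    set g : (Fin n → Z) → ℝ := fun T => ∫ z, f (Fin.cons z T) ∂Q with hg
    have hfconsm : Measurable (fun zt : Z × (Fin n → Z) => f (Fin.cons zt.1 zt.2)) :=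
      hfm.comp (measurable_finCons n)
    have hgm : Measurable g := by
      have h := StronglyMeasurable.integral_prod_left' (μ := Q) hfconsm.stronglyMeasurable
      exact h.measurable
    have hzsecm : ∀ T, Measurable (fun z => f (Fin.cons z T)) := by
      intro T
      exact hfconsm.comp (measurable_id.prodMk measurable_const)
    have hzint : ∀ T, Integrable (fun z => f (Fin.cons z T)) Q := fun T =>
      integrable_of_bounded' (hzsecm T) B (fun z => hfB _)
    have hgB : ∀ T, |g T| ≤ B := by
      intro T
      calc |g T| ≤ ∫ z, |f (Fin.cons z T)| ∂Q := abs_integral_le _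
        _ ≤ ∫ _ : Z, B ∂Q := integral_mono ((hzint T).abs) (integrable_const B)
            (fun z => hfB _)
        _ = B := by simp
    have hgdiff : ∀ (T : Fin n → Z) (i : Fin n) (z : Z),
        |g (Function.update T i z) - g T| ≤ c := by
      intro T i z
      have heq : ∀ z', f (Fin.cons z' (Function.update T i z))
          = f (Function.update (Fin.cons z' T) i.succ z) := by
        intro z'; rw [Fin.cons_update]
      have hsub : g (Function.update T i z) - g T
          = ∫ z', (f (Fin.cons z' (Function.update T i z)) - f (Fin.cons z' T)) ∂Q := by
        rw [hg, integral_sub (hzint _) (hzint T)]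
      rw [hsub]
      calc |∫ z', (f (Fin.cons z' (Function.update T i z)) - f (Fin.cons z' T)) ∂Q|
          ≤ ∫ z', |f (Fin.cons z' (Function.update T i z)) - f (Fin.cons z' T)| ∂Q :=
            abs_integral_le _
        _ ≤ ∫ _ : Z, c ∂Q := by
            apply integral_mono ((hzint _).sub (hzint T)).abs (integrable_const c)
            intro z'
            show |f (Fin.cons z' (Function.update T i z)) - f (Fin.cons z' T)| ≤ c
            rw [heq z']
            exact hdiff _ _ _
        _ = c := by simp
    -- bounds and constants
    set K : ℝ := exp (s ^ 2 * c ^ 2 / 8) with hKdef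
    have hmB : |m| ≤ B := by
      rw [hm]
      calc |∫ T, f T ∂P1| ≤ ∫ T, |f T| ∂P1 := abs_integral_le _
        _ ≤ ∫ _, B ∂P1 := integral_mono
            ((integrable_of_bounded' hfm B hfB).abs) (integrable_const B) (fun S => hfB S)
        _ = B := by simp
    have habsF : ∀ (x : ℝ), |x| ≤ |m| + B → |exp (s * (m - x))| ≤ exp (|s| * (|m| + B + B)) := by
      intro x hx
      rw [abs_of_pos (exp_pos _)]
      apply exp_le_exp.mpr
      calc s * (m - x) ≤ |s * (m - x)| := le_abs_self _
        _ = |s| * |m - x| := abs_mul _ _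
        _ ≤ |s| * (|m| + B + B) := by
            apply mul_le_mul_of_nonneg_left _ (abs_nonneg s)
            calc |m - x| ≤ |m| + |x| := abs_sub _ _
              _ ≤ |m| + (|m| + B) := by linarith
              _ ≤ |m| + B + B := by linarith [hmB]
    set C0 : ℝ := exp (|s| * (|m| + B + B)) with hC0
    set F : Z × (Fin n → Z) → ℝ := fun zt => exp (s * (m - f (Fin.cons zt.1 zt.2))) with hF
    have hFm : Measurable F := by
      apply Measurable.exp
      exact (measurable_const.sub (hfm.comp (measurable_finCons n))).const_mul s
    have hFbound : ∀ zt, |F zt| ≤ C0 := by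
      intro zt
      apply habsF
      calc |f (Fin.cons zt.1 zt.2)| ≤ B := hfB _
        _ ≤ |m| + B := by linarith [abs_nonneg m]
    have hFint : Integrable F (Q.prod Pn) := integrable_of_bounded' hFm C0 hFbound
    have step1 : ∫ S, exp (s * (m - f S)) ∂P1 = ∫ zt, F zt ∂(Q.prod Pn) := by
      apply hcomp
      exact ((measurable_const.sub hfm).const_mul s).exp
    have step2 : ∫ zt, F zt ∂(Q.prod Pn) = ∫ T, ∫ z, F (z, T) ∂Q ∂Pn :=
      integral_prod_symm F hFint
    have hsplit : ∀ T, ∫ z, F (z, T) ∂Q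
        = exp (s * (m - g T)) * ∫ z, exp (s * (g T - f (Fin.cons z T))) ∂Q := by
      intro T
      rw [← integral_const_mul]
      congr 1
      funext z
      show exp (s * (m - f (Fin.cons z T))) = _
      rw [← exp_add]
      congr 1
      ring
    have hinner : ∀ T, ∫ z, exp (s * (g T - f (Fin.cons z T))) ∂Q ≤ K := by
      intro T
      set R : Set ℝ := Set.range (fun z => f (Fin.cons z T)) with hR
      have hRne : R.Nonempty := Set.range_nonempty _
      have hRbdd : BddAbove R := by
        refine ⟨B, ?_⟩
        rintro _ ⟨z, rfl⟩
        exact le_trans (le_abs_self _) (hfB _)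
      set a : ℝ := g T - sSup R with ha
      have hXm : Measurable (fun z => g T - f (Fin.cons z T)) :=
        measurable_const.sub (hzsecm T)
      have hXbounds : ∀ z, a ≤ g T - f (Fin.cons z T) ∧ g T - f (Fin.cons z T) ≤ a + c := by
        intro z
        constructor
        · have : f (Fin.cons z T) ≤ sSup R := le_csSup hRbdd ⟨z, rfl⟩
          rw [ha]; linarith
        · have hSle : sSup R ≤ f (Fin.cons z T) + c := by
            apply csSup_le hRne
            rintro _ ⟨z', rfl⟩
            have h1 := hdiff (Fin.cons z T) 0 z'
            rw [Fin.update_cons_zero] at h1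
            have := abs_le.mp h1
            linarith [this.1, this.2]
          rw [ha]; linarith
      have hXmean : ∫ z, (g T - f (Fin.cons z T)) ∂Q = 0 := by
        rw [integral_sub (integrable_const _) (hzint T), integral_const]
        simp [hg]
      have h := hoeffding_lemma Q (fun z => g T - f (Fin.cons z T)) hXm a (a + c)
        hXbounds hXmean s
      calc ∫ z, exp (s * (g T - f (Fin.cons z T))) ∂Q
          ≤ exp (s ^ 2 * (a + c - a) ^ 2 / 8) := h
        _ = K := by rw [hKdef]; congr 1; ring
    set Gout : (Fin n → Z) → ℝ := fun T => exp (s * (m - g T)) with hGout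
    have hGoutm : Measurable Gout := ((measurable_const.sub hgm).const_mul s).exp
    have hGoutbound : ∀ T, |Gout T| ≤ C0 := by
      intro T
      apply habsF
      calc |g T| ≤ B := hgB T
        _ ≤ |m| + B := by linarith [abs_nonneg m]
    have hGoutint : Integrable Gout Pn := integrable_of_bounded' hGoutm C0 hGoutbound
    have step3 : ∫ T, ∫ z, F (z, T) ∂Q ∂Pn ≤ ∫ T, Gout T * K ∂Pn := by
      apply integral_mono hFint.integral_prod_right (hGoutint.mul_const K)
      intro T
      show ∫ z, F (z, T) ∂Q ≤ Gout T * K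
      rw [hsplit T]
      exact mul_le_mul_of_nonneg_left (hinner T) (exp_pos _).le
    have hfconsint : Integrable (fun zt : Z × (Fin n → Z) => f (Fin.cons zt.1 zt.2))
        (Q.prod Pn) :=
      integrable_of_bounded' hfconsm B (fun zt => hfB _)
    have hmg : m = ∫ T, g T ∂Pn := by
      rw [hm, hcomp f hfm, integral_prod_symm _ hfconsint]
    have step5 : ∫ T, Gout T ∂Pn ≤ exp (s ^ 2 * n * c ^ 2 / 8) := by
      have h := ih g B hgm hgB c hc hgdiff s
      rw [← hmg] at h
      exact h
    calc ∫ S, exp (s * (m - f S)) ∂P1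
        = ∫ T, ∫ z, F (z, T) ∂Q ∂Pn := by rw [step1, step2]
      _ ≤ ∫ T, Gout T * K ∂Pn := step3
      _ = (∫ T, Gout T ∂Pn) * K := integral_mul_const _ _
      _ ≤ exp (s ^ 2 * n * c ^ 2 / 8) * K := by
          apply mul_le_mul_of_nonneg_right step5
          rw [hKdef]; positivity
      _ = exp (s ^ 2 * (n + 1 : ℕ) * c ^ 2 / 8) := by
          rw [hKdef, ← exp_add]
          congr 1
          push_cast
          ring

lemma mcdiarmid_tail {Z : Type*} [MeasurableSpace Z] (Q : Measure Z) [IsProbabilityMeasure Q]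
    (hZ : Nonempty Z) (n : ℕ) (f : (Fin n → Z) → ℝ) (B : ℝ) (hfm : Measurable f)
    (hfB : ∀ S, |f S| ≤ B) (c : ℝ) (hc : 0 ≤ c)
    (hdiff : ∀ (S : Fin n → Z) (i : Fin n) (z : Z), |f (Function.update S i z) - f S| ≤ c)
    (t s : ℝ) (hs : 0 < s) :
    (Measure.pi fun _ : Fin n => Q)
        {S | t ≤ (∫ T, f T ∂(Measure.pi fun _ : Fin n => Q)) - f S}
      ≤ ENNReal.ofReal (exp (s ^ 2 * n * c ^ 2 / 8 - s * t)) := by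
  set μ := Measure.pi fun _ : Fin n => Q with hμ
  set m : ℝ := ∫ T, f T ∂μ with hm
  have hmB : |m| ≤ B := by
    calc |m| ≤ ∫ T, |f T| ∂μ := by
          simpa [Real.norm_eq_abs] using norm_integral_le_integral_norm (μ := μ) f
      _ ≤ ∫ _, B ∂μ := integral_mono (integrable_of_bounded' hfm B hfB).abs
          (integrable_const B) hfB
      _ = B := by simp
  have hgm : Measurable (fun S => exp (s * (m - f S))) :=
    ((measurable_const.sub hfm).const_mul s).exp
  have hgint : Integrable (fun S => exp (s * (m - f S))) μ := by
    apply integrable_of_bounded' hgm (exp (|s| * (|m| + B)))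
    intro S
    rw [abs_of_pos (exp_pos _)]
    apply exp_le_exp.mpr
    calc s * (m - f S) ≤ |s * (m - f S)| := le_abs_self _
      _ = |s| * |m - f S| := abs_mul _ _
      _ ≤ |s| * (|m| + B) := by
          apply mul_le_mul_of_nonneg_left _ (abs_nonneg s)
          calc |m - f S| ≤ |m| + |f S| := abs_sub _ _
            _ ≤ |m| + B := by linarith [hfB S]
  have hsetEq : {S : Fin n → Z | t ≤ m - f S} = {S | exp (s * t) ≤ exp (s * (m - f S))} := by
    ext S
    simp only [Set.mem_setOf_eq, exp_le_exp]
    exact ⟨fun h => mul_le_mul_of_nonneg_left h hs.le, fun h => le_of_mul_le_mul_left h hs⟩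
  have hmarkov := mul_meas_ge_le_integral_of_nonneg
    (ae_of_all μ (fun S => (exp_pos (s * (m - f S))).le)) hgint (exp (s * t))
  have hmgf := mcdiarmid_mgf Q hZ n f B hfm hfB c hc hdiff s
  rw [← hm] at hmgf
  have hne : μ {S | exp (s * t) ≤ exp (s * (m - f S))} ≠ ⊤ := measure_ne_top μ _
  have htoReal : (μ {S | exp (s * t) ≤ exp (s * (m - f S))}).toReal
      ≤ exp (s ^ 2 * n * c ^ 2 / 8 - s * t) := by
    have h1 : exp (s * t) * (μ {S | exp (s * t) ≤ exp (s * (m - f S))}).toReal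
        ≤ exp (s ^ 2 * n * c ^ 2 / 8) := le_trans hmarkov hmgf
    have h2 : exp (s ^ 2 * n * c ^ 2 / 8 - s * t)
        = exp (s ^ 2 * n * c ^ 2 / 8) / exp (s * t) := by
      rw [exp_sub]
    rw [h2, le_div_iff₀ (exp_pos _)]
    linarith [h1]
  calc μ {S : Fin n → Z | t ≤ m - f S}
      = μ {S | exp (s * t) ≤ exp (s * (m - f S))} := by rw [hsetEq]
    _ = ENNReal.ofReal ((μ {S | exp (s * t) ≤ exp (s * (m - f S))}).toReal) :=
        (ENNReal.ofReal_toReal hne).symm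
    _ ≤ ENNReal.ofReal (exp (s ^ 2 * n * c ^ 2 / 8 - s * t)) :=
        ENNReal.ofReal_le_ofReal htoReal

lemma map_pair {Z : Type*} [MeasurableSpace Z] (Q : Measure Z) [IsProbabilityMeasure Q]
    (n : ℕ) (i j : Fin n) (hij : i ≠ j) :
    Measure.map (fun S : Fin n → Z => (S i, S j)) (Measure.pi fun _ : Fin n => Q)
      = Q.prod Q := by
  have hmeas : Measurable (fun S : Fin n → Z => (S i, S j)) :=
    (measurable_pi_apply i).prodMk (measurable_pi_apply j)
  symm
  apply Measure.prod_eq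
  intro s t hs ht
  rw [Measure.map_apply hmeas (hs.prod ht)]
  have hpre : (fun S : Fin n → Z => (S i, S j)) ⁻¹' (s ×ˢ t)
      = Set.pi Set.univ
          (Function.update (Function.update (fun _ : Fin n => (Set.univ : Set Z)) i s) j t) := by
    ext S
    simp only [Set.mem_preimage, Set.mem_prod, Set.mem_pi, Set.mem_univ, true_implies]
    constructor
    · rintro ⟨h1, h2⟩ k
      rcases eq_or_ne k j with rfl | hkj
      · rwa [Function.update_self]
      · rw [Function.update_of_ne hkj]
        rcases eq_or_ne k i with rfl | hki
        · rwa [Function.update_self]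
        · rw [Function.update_of_ne hki]; trivial
    · intro h
      constructor
      · have := h i
        rwa [Function.update_of_ne hij, Function.update_self] at this
      · have := h j
        rwa [Function.update_self] at this
  rw [hpre, Measure.pi_pi]
  simp_rw [Function.apply_update (fun _ x => Q x)]
  rw [Finset.prod_update_of_mem (Finset.mem_univ j)]
  have hi : i ∈ Finset.univ \ {j} := by
    simp [hij]
  rw [Finset.prod_update_of_mem hi]
  simp [mul_comm]

lemma mean_emp {Z : Type*} [MeasurableSpace Z] (L : Z → Z → ℝ)
    (hLmeas : Measurable (Function.uncurry L))
    (hL0 : ∀ z z', 0 ≤ L z z') (hL1 : ∀ z z', L z z' ≤ 1)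
    (Q : Measure Z) [IsProbabilityMeasure Q] (n : ℕ) (hn : 2 ≤ n) :
    ∫ S, (1 / ((n : ℝ) * ((n : ℝ) - 1))) *
        ∑ i : Fin n, ∑ j : Fin n, (if i ≠ j then L (S i) (S j) else 0)
        ∂(Measure.pi fun _ : Fin n => Q)
      = ∫ z, ∫ z', L z z' ∂Q ∂Q := by
  set μ := Measure.pi fun _ : Fin n => Q with hμ
  set R : ℝ := ∫ z, ∫ z', L z z' ∂Q ∂Q with hR
  have hLb : ∀ p : Z × Z, |Function.uncurry L p| ≤ 1 := by
    rintro ⟨z, z'⟩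
    simp only [Function.uncurry_apply_pair]
    rw [abs_le]
    exact ⟨by linarith [hL0 z z'], hL1 z z'⟩
  have hLint : Integrable (Function.uncurry L) (Q.prod Q) :=
    integrable_of_bounded' hLmeas 1 hLb
  have hpairm : ∀ i j : Fin n, Measurable (fun S : Fin n → Z => L (S i) (S j)) := by
    intro i j
    have h : (fun S : Fin n → Z => L (S i) (S j))
        = (Function.uncurry L) ∘ (fun S => (S i, S j)) := rfl
    rw [h]
    exact hLmeas.comp ((measurable_pi_apply i).prodMk (measurable_pi_apply j))
  have hterm : ∀ i j : Fin n, i ≠ j → ∫ S, L (S i) (S j) ∂μ = R := by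
    intro i j hij
    have hφ : Measurable (fun S : Fin n → Z => (S i, S j)) :=
      (measurable_pi_apply i).prodMk (measurable_pi_apply j)
    calc ∫ S, L (S i) (S j) ∂μ
        = ∫ p, Function.uncurry L p
            ∂(Measure.map (fun S : Fin n → Z => (S i, S j)) μ) := by
          rw [integral_map hφ.aemeasurable]
          · rfl
          · rw [map_pair Q n i j hij]
            exact hLint.aestronglyMeasurable
      _ = ∫ p, Function.uncurry L p ∂(Q.prod Q) := by rw [map_pair Q n i j hij]
      _ = R := by
          rw [hR, integral_prod _ hLint]
          simp only [Function.uncurry_apply_pair]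
  have htint : ∀ i j : Fin n,
      Integrable (fun S : Fin n → Z => if i ≠ j then L (S i) (S j) else 0) μ := by
    intro i j
    by_cases h : i ≠ j
    · simp only [if_pos h]
      apply integrable_of_bounded' (hpairm i j) 1
      intro S
      rw [abs_le]
      exact ⟨by linarith [hL0 (S i) (S j)], hL1 (S i) (S j)⟩
    · simp only [if_neg h]
      exact integrable_const 0
  have hsum : ∫ S, (∑ i : Fin n, ∑ j : Fin n, (if i ≠ j then L (S i) (S j) else 0)) ∂μ
      = ∑ i : Fin n, ∑ j : Fin n, (if i ≠ j then R else 0) := by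
    rw [integral_finset_sum _ (fun i _ => integrable_finset_sum _ (fun j _ => htint i j))]
    congr 1
    funext i
    rw [integral_finset_sum _ (fun j _ => htint i j)]
    congr 1
    funext j
    by_cases h : i ≠ j
    · simp only [if_pos h]
      exact hterm i j h
    · simp only [if_neg h]
      simp
  have hcount : ∑ i : Fin n, ∑ j : Fin n, (if i ≠ j then R else 0)
      = (n : ℝ) * ((n : ℝ) - 1) * R := by
    have hrow : ∀ i : Fin n, ∑ j : Fin n, (if i ≠ j then R else 0) = (n : ℝ) * R - R := by
      intro i
      have h1 : ∀ j : Fin n, (if i ≠ j then R else 0) = R - (if i = j then R else 0) := by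
        intro j
        by_cases h : i = j <;> simp [h]
      simp_rw [h1]
      rw [Finset.sum_sub_distrib, Finset.sum_const, Finset.sum_ite_eq]
      simp [mul_comm]
    simp_rw [hrow]
    rw [Finset.sum_const]
    simp
    ring
  have hne : (n : ℝ) * ((n : ℝ) - 1) ≠ 0 := by
    have h2 : (2 : ℝ) ≤ (n : ℝ) := by exact_mod_cast hn
    have : (0 : ℝ) < (n : ℝ) * ((n : ℝ) - 1) := by nlinarith
    exact this.ne'
  rw [integral_const_mul, hsum, hcount]
  field_simp
  exact mul_div_cancel_left₀ R (by have h2 : (2 : ℝ) ≤ (n : ℝ) := by exact_mod_cast hn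
                                   linarith)

lemma remp_bdd_diff {Z : Type*} [MeasurableSpace Z] (L : Z → Z → ℝ)
    (hL0 : ∀ z z', 0 ≤ L z z') (hL1 : ∀ z z', L z z' ≤ 1)
    (n : ℕ) (hn : 2 ≤ n) (S : Fin n → Z) (k : Fin n) (z : Z) :
    |(1 / ((n : ℝ) * ((n : ℝ) - 1))) *
        ∑ i : Fin n, ∑ j : Fin n, (if i ≠ j then L (Function.update S k z i) (Function.update S k z j) else 0)
      - (1 / ((n : ℝ) * ((n : ℝ) - 1))) *
        ∑ i : Fin n, ∑ j : Fin n, (if i ≠ j then L (S i) (S j) else 0)|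
      ≤ 2 / (n : ℝ) := by
  have hn1 : (1 : ℝ) ≤ (n : ℝ) - 1 := by
    have : (2:ℝ) ≤ (n:ℝ) := by exact_mod_cast hn
    linarith
  have hnpos : (0:ℝ) < n := by linarith
  set S' := Function.update S k z with hS'
  set d : Fin n → Fin n → ℝ := fun i j =>
    (if i ≠ j then L (S' i) (S' j) else 0) - (if i ≠ j then L (S i) (S j) else 0) with hd
  have hdb : ∀ i j, |d i j| ≤ (if i ≠ j ∧ (i = k ∨ j = k) then (1:ℝ) else 0) := by
    intro i j
    by_cases hij : i ≠ j
    · by_cases hik : i = k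
      · rw [if_pos ⟨hij, Or.inl hik⟩, hd]
        simp only [if_pos hij]
        rw [abs_le]
        constructor
        · linarith [hL0 (S' i) (S' j), hL1 (S i) (S j)]
        · linarith [hL1 (S' i) (S' j), hL0 (S i) (S j)]
      · by_cases hjk : j = k
        · rw [if_pos ⟨hij, Or.inr hjk⟩, hd]
          simp only [if_pos hij]
          rw [abs_le]
          constructor
          · linarith [hL0 (S' i) (S' j), hL1 (S i) (S j)]
          · linarith [hL1 (S' i) (S' j), hL0 (S i) (S j)]
        · have hzero : d i j = 0 := by
            rw [hd]
            simp only [if_pos hij, hS', Function.update_of_ne hik, Function.update_of_ne hjk,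
              sub_self]
          rw [hzero, if_neg]
          · simp
          · rintro ⟨-, h | h⟩
            · exact hik h
            · exact hjk h
    · have hzero : d i j = 0 := by rw [hd]; simp only [if_neg hij, sub_self]
      rw [hzero, if_neg]
      · simp
      · rintro ⟨h, -⟩; exact hij h
  have hcount : ∑ i : Fin n, ∑ j : Fin n, (if i ≠ j ∧ (i = k ∨ j = k) then (1:ℝ) else 0)
      = 2 * ((n : ℝ) - 1) := by
    rw [Finset.sum_eq_add_sum_sdiff_singleton_of_mem (Finset.mem_univ k)]
    have hrow_k : ∑ j : Fin n, (if k ≠ j ∧ (k = k ∨ j = k) then (1:ℝ) else 0)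
        = (n : ℝ) - 1 := by
      have h1 : ∀ j : Fin n, (if k ≠ j ∧ (k = k ∨ j = k) then (1:ℝ) else 0)
          = 1 - (if k = j then (1:ℝ) else 0) := by
        intro j
        by_cases h : k = j
        · rw [if_neg (by rintro ⟨hc, -⟩; exact hc h), if_pos h]; norm_num
        · rw [if_pos ⟨h, Or.inl rfl⟩, if_neg h]; norm_num
      rw [Finset.sum_congr rfl (fun j _ => h1 j)]
      rw [Finset.sum_sub_distrib, Finset.sum_const, Finset.sum_ite_eq]
      simp
    have hrow_ne : ∀ i ∈ Finset.univ \ {k},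
        ∑ j : Fin n, (if i ≠ j ∧ (i = k ∨ j = k) then (1:ℝ) else 0) = 1 := by
      intro i hi
      have hik : i ≠ k := by
        simp only [Finset.mem_sdiff, Finset.mem_singleton] at hi
        exact hi.2
      have h1 : ∀ j : Fin n, (if i ≠ j ∧ (i = k ∨ j = k) then (1:ℝ) else 0)
          = (if j = k then (1:ℝ) else 0) := by
        intro j
        by_cases h : j = k
        · subst h
          rw [if_pos ⟨fun he => hik he, Or.inr rfl⟩, if_pos rfl]
        · rw [if_neg, if_neg h]
          rintro ⟨-, hc | hc⟩
          · exact hik hc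
          · exact h hc
      rw [Finset.sum_congr rfl (fun j _ => h1 j)]
      rw [Finset.sum_ite_eq']
      simp
    rw [hrow_k, Finset.sum_congr rfl hrow_ne, Finset.sum_const]
    have hcard : (Finset.univ \ {k} : Finset (Fin n)).card = n - 1 := by
      rw [Finset.sdiff_singleton_eq_erase, Finset.card_erase_of_mem (Finset.mem_univ k)]
      simp
    rw [hcard]
    have : ((n - 1 : ℕ) : ℝ) = (n : ℝ) - 1 := by
      have : 1 ≤ n := le_trans (by norm_num) hn
      push_cast [Nat.cast_sub this]
      ring
    rw [nsmul_eq_mul, this]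
    ring
  have hdiffsum : (1 / ((n : ℝ) * ((n : ℝ) - 1))) *
        (∑ i : Fin n, ∑ j : Fin n, (if i ≠ j then L (S' i) (S' j) else 0))
      - (1 / ((n : ℝ) * ((n : ℝ) - 1))) *
        (∑ i : Fin n, ∑ j : Fin n, (if i ≠ j then L (S i) (S j) else 0))
      = (1 / ((n : ℝ) * ((n : ℝ) - 1))) * ∑ i : Fin n, ∑ j : Fin n, d i j := by
    rw [← mul_sub]
    congr 1
    rw [← Finset.sum_sub_distrib]
    congr 1
    funext i
    rw [← Finset.sum_sub_distrib]
  rw [hdiffsum, abs_mul]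
  have hcoeff : |1 / ((n : ℝ) * ((n : ℝ) - 1))| = 1 / ((n : ℝ) * ((n : ℝ) - 1)) := by
    rw [abs_of_pos]
    positivity
  rw [hcoeff]
  have habs : |∑ i : Fin n, ∑ j : Fin n, d i j| ≤ 2 * ((n : ℝ) - 1) := by
    calc |∑ i : Fin n, ∑ j : Fin n, d i j|
        ≤ ∑ i : Fin n, |∑ j : Fin n, d i j| := Finset.abs_sum_le_sum_abs _ _
      _ ≤ ∑ i : Fin n, ∑ j : Fin n, |d i j| := by
          apply Finset.sum_le_sum
          intro i _
          exact Finset.abs_sum_le_sum_abs _ _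
      _ ≤ ∑ i : Fin n, ∑ j : Fin n, (if i ≠ j ∧ (i = k ∨ j = k) then (1:ℝ) else 0) := by
          apply Finset.sum_le_sum
          intro i _
          apply Finset.sum_le_sum
          intro j _
          exact hdb i j
      _ = 2 * ((n : ℝ) - 1) := hcount
  calc 1 / ((n : ℝ) * ((n : ℝ) - 1)) * |∑ i : Fin n, ∑ j : Fin n, d i j|
      ≤ 1 / ((n : ℝ) * ((n : ℝ) - 1)) * (2 * ((n : ℝ) - 1)) := by
        apply mul_le_mul_of_nonneg_left habs
        positivity
    _ = 2 / (n : ℝ) := by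
        field_simp

/-- Let `P_target` and `Q` be probability measures on `Z` and
`e = R_exp(P_target) - R_exp(Q)`. If `S ~ Q^⊗n` (i.i.d., `n ≥ 2`), then for any `δ ∈ (0,1)`,
with probability at least `1 - δ` over the draw of `S`,
`R_exp(P_target) ≤ R_emp(S) + e + sqrt (2 * log (1/δ) / n)`. -/
theorem stmt2
    {Z : Type*} [MeasurableSpace Z]
    (L : Z → Z → ℝ)
    (hLmeas : Measurable (Function.uncurry L))
    (hL0 : ∀ z z', 0 ≤ L z z') (hL1 : ∀ z z', L z z' ≤ 1)
    (hLsym : ∀ z z', L z z' = L z' z)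
    (Ptarget Q : Measure Z) [IsProbabilityMeasure Ptarget] [IsProbabilityMeasure Q]
    (e : ℝ)
    (he : e = (∫ z, ∫ z', L z z' ∂Ptarget ∂Ptarget) - ∫ z, ∫ z', L z z' ∂Q ∂Q)
    (n : ℕ) (hn : 2 ≤ n)
    (δ : ℝ) (hδ0 : 0 < δ) (hδ1 : δ < 1) :
    ENNReal.ofReal (1 - δ) ≤
      Measure.pi (fun _ : Fin n => Q)
        {S : Fin n → Z |
          (∫ z, ∫ z', L z z' ∂Ptarget ∂Ptarget) ≤
            (1 / ((n : ℝ) * ((n : ℝ) - 1))) *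
              ∑ i : Fin n, ∑ j : Fin n, (if i ≠ j then L (S i) (S j) else 0)
            + e + Real.sqrt (2 * Real.log (1 / δ) / (n : ℝ)) } := by
  have hZ : Nonempty Z := by
    by_contra h
    rw [not_nonempty_iff] at h
    have h1 : Q Set.univ = 1 := measure_univ
    rw [Set.univ_eq_empty_iff.mpr h] at h1
    simp at h1
  have hnR : (2:ℝ) ≤ (n:ℝ) := by exact_mod_cast hn
  have hnpos : (0:ℝ) < n := by linarith
  set μ : Measure (Fin n → Z) := Measure.pi fun _ : Fin n => Q with hμ
  set f : (Fin n → Z) → ℝ := fun S => (1 / ((n : ℝ) * ((n : ℝ) - 1))) *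
      ∑ i : Fin n, ∑ j : Fin n, (if i ≠ j then L (S i) (S j) else 0) with hf
  have hfm : Measurable f := by
    apply Measurable.const_mul
    apply Finset.measurable_sum
    intro i _
    apply Finset.measurable_sum
    intro j _
    by_cases h : i ≠ j
    · simp only [if_pos h]
      have heq : (fun S : Fin n → Z => L (S i) (S j))
          = (Function.uncurry L) ∘ (fun S => (S i, S j)) := rfl
      rw [heq]
      exact hLmeas.comp ((measurable_pi_apply i).prodMk (measurable_pi_apply j))
    · simp only [if_neg h]
      exact measurable_const
  have hfB : ∀ S, |f S| ≤ (n:ℝ) * n := by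
    intro S
    rw [hf, abs_mul]
    have hcoeffpos : (0:ℝ) < 1 / ((n : ℝ) * ((n : ℝ) - 1)) := by
      apply div_pos one_pos; nlinarith
    have h1 : |1 / ((n : ℝ) * ((n : ℝ) - 1))| ≤ 1 := by
      rw [abs_of_pos hcoeffpos]
      rw [div_le_one (by nlinarith)]
      nlinarith
    have h2 : |∑ i : Fin n, ∑ j : Fin n, (if i ≠ j then L (S i) (S j) else 0)| ≤ (n:ℝ) * n := by
      calc |∑ i : Fin n, ∑ j : Fin n, (if i ≠ j then L (S i) (S j) else 0)|
          ≤ ∑ i : Fin n, ∑ j : Fin n, |if i ≠ j then L (S i) (S j) else 0| := by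
            apply le_trans (Finset.abs_sum_le_sum_abs _ _)
            apply Finset.sum_le_sum
            intro i _
            exact Finset.abs_sum_le_sum_abs _ _
        _ ≤ ∑ _i : Fin n, ∑ _j : Fin n, (1:ℝ) := by
            apply Finset.sum_le_sum
            intro i _
            apply Finset.sum_le_sum
            intro j _
            by_cases h : i ≠ j
            · rw [if_pos h, abs_le]
              exact ⟨by linarith [hL0 (S i) (S j)], hL1 (S i) (S j)⟩
            · rw [if_neg h]; simp
        _ = (n:ℝ) * n := by simp [mul_comm]
    calc |1 / ((n : ℝ) * ((n : ℝ) - 1))| * |∑ i : Fin n, ∑ j : Fin n, (if i ≠ j then L (S i) (S j) else 0)|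
        ≤ 1 * ((n:ℝ) * n) := mul_le_mul h1 h2 (abs_nonneg _) (by norm_num)
      _ = (n:ℝ) * n := one_mul _
  have hdiff : ∀ (S : Fin n → Z) (i : Fin n) (z : Z),
      |f (Function.update S i z) - f S| ≤ 2 / (n:ℝ) :=
    fun S i z => remp_bdd_diff L hL0 hL1 n hn S i z
  set t : ℝ := Real.sqrt (2 * Real.log (1 / δ) / (n : ℝ)) with ht
  have hlog : 0 < Real.log (1 / δ) := by
    rw [one_div, Real.log_inv]
    have := Real.log_neg hδ0 hδ1
    linarith
  have htpos : 0 < t := by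
    rw [ht]
    apply Real.sqrt_pos.mpr
    positivity
  set s : ℝ := (n : ℝ) * t with hs
  have hspos : 0 < s := by positivity
  have hmean : (∫ T, f T ∂μ) = ∫ z, ∫ z', L z z' ∂Q ∂Q :=
    mean_emp L hLmeas hL0 hL1 Q n hn
  have htail := mcdiarmid_tail Q hZ n f ((n:ℝ) * n) hfm hfB (2 / (n:ℝ))
    (by positivity) hdiff t s hspos
  have hexp : s ^ 2 * n * (2 / (n:ℝ)) ^ 2 / 8 - s * t = Real.log δ := by
    have ht2 : t ^ 2 = 2 * Real.log (1 / δ) / (n : ℝ) := by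
      rw [ht, sq_sqrt (by positivity)]
    have hcalc : s ^ 2 * n * (2 / (n:ℝ)) ^ 2 / 8 - s * t = -((n:ℝ) * t ^ 2 / 2) := by
      rw [hs]
      field_simp
      ring
    rw [hcalc, ht2]
    rw [one_div, Real.log_inv]
    field_simp
  rw [hexp, Real.exp_log hδ0] at htail
  -- the event
  set m : ℝ := ∫ T, f T ∂μ with hm
  set A : Set (Fin n → Z) := {S | t ≤ m - f S} with hA
  have hAmeas : MeasurableSet A := by
    apply measurableSet_le measurable_const
    exact (measurable_const.sub hfm)
  have hsub : Aᶜ ⊆ {S : Fin n → Z |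
      (∫ z, ∫ z', L z z' ∂Ptarget ∂Ptarget) ≤ f S + e + t} := by
    intro S hS
    simp only [hA, Set.mem_compl_iff, Set.mem_setOf_eq, not_le] at hS
    simp only [Set.mem_setOf_eq]
    have hRP : (∫ z, ∫ z', L z z' ∂Ptarget ∂Ptarget) = m + e := by
      rw [he, hmean]; ring
    rw [hRP]
    linarith
  calc ENNReal.ofReal (1 - δ)
      = 1 - ENNReal.ofReal δ := by
        rw [ENNReal.ofReal_sub 1 hδ0.le, ENNReal.ofReal_one]
    _ ≤ 1 - μ A := by
        apply tsub_le_tsub_left htail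
    _ = μ Aᶜ := (prob_compl_eq_one_sub hAmeas).symm
    _ ≤ μ {S : Fin n → Z |
          (∫ z, ∫ z', L z z' ∂Ptarget ∂Ptarget) ≤ f S + e + t} := measure_mono hsub
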